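/- Let A₊ be a Com-PreLie algebra (not necessarily unitary) and f : A₊ → A₊ a linear map that is a derivation for both products: f(x·y) = f(x)·y + x·f(y) and f(x•y) = f(x)•y + x•f(y). Set A = A₊ ⊕ K·1 and extend the products by 1·1 = 1, x·1 = 1·x = x, 1•a = 0 for all a ∈ A, x•1 = f(x) for x ∈ A₊. Then A is a unitary Com-PreLie algebra. -/

import Mathlib

/-- Adjoining a unit to a Com-PreLie algebra `A₊` along a derivation `f` (for
both products), with `x • 1 = f(x)` and `1 • a = 0`, yields a unitary
Com-PreLie algebra on `A = A₊ ⊕ K`. -/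
theorem unitization_comPreLie {K A : Type*} [Field K] [CharZero K]
    [AddCommGroup A] [Module K A]
    (mul bul : A →ₗ[K] A →ₗ[K] A)
    (hcomm : ∀ x y : A, mul x y = mul y x)
    (hassoc : ∀ x y z : A, mul (mul x y) z = mul x (mul y z))
    (hpre : ∀ x y z : A,
      bul (bul x y) z - bul x (bul y z) = bul (bul x z) y - bul x (bul z y))
    (hleib : ∀ x y z : A, bul (mul x y) z = mul (bul x z) y + mul x (bul y z))
    (f : A →ₗ[K] A)
    (hfmul : ∀ x y : A, f (mul x y) = mul (f x) y + mul x (f y))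
    (hfbul : ∀ x y : A, f (bul x y) = bul (f x) y + bul x (f y))
    (M B : (A × K) →ₗ[K] (A × K) →ₗ[K] (A × K))
    (hM : ∀ (x y : A) (s t : K),
      M (x, s) (y, t) = (mul x y + t • x + s • y, s * t))
    (hB : ∀ (x y : A) (s t : K),
      B (x, s) (y, t) = (bul x y + t • f x, 0)) :
    (∀ p q : A × K, M p q = M q p) ∧
    (∀ p q r : A × K, M (M p q) r = M p (M q r)) ∧
    (∀ p : A × K, M ((0, 1) : A × K) p = p) ∧
    (∀ p q r : A × K,
      B (B p q) r - B p (B q r) = B (B p r) q - B p (B r q)) ∧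
    (∀ p q r : A × K, B (M p q) r = M (B p r) q + M p (B q r)) := by
  refine ⟨?_, ?_, ?_, ?_, ?_⟩
  · rintro ⟨x, s⟩ ⟨y, t⟩
    simp only [hM, Prod.mk.injEq]
    exact ⟨by rw [hcomm]; abel, mul_comm s t⟩
  · rintro ⟨x, s⟩ ⟨y, t⟩ ⟨z, u⟩
    simp only [hM, map_add, map_smul, LinearMap.add_apply, LinearMap.smul_apply,
      Prod.smul_mk, Prod.mk_add_mk, smul_eq_mul, Prod.mk.injEq, hassoc]
    constructor
    · module
    · ring
  · rintro ⟨x, s⟩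
    simp [hM]
  · rintro ⟨x, s⟩ ⟨y, t⟩ ⟨z, u⟩
    simp only [hB, map_add, map_smul, LinearMap.add_apply, LinearMap.smul_apply,
      Prod.smul_mk, Prod.mk_add_mk, Prod.mk_sub_mk, smul_eq_mul, Prod.mk.injEq,
      hfbul, map_zero, LinearMap.zero_apply, smul_zero, add_zero, sub_zero, sub_self]
    refine ⟨?_, trivial⟩
    have h := hpre x y z
    simp only [smul_add, smul_smul, mul_comm u t]
    linear_combination (norm := module) h
  · rintro ⟨x, s⟩ ⟨y, t⟩ ⟨z, u⟩
    simp only [hM, hB, map_add, map_smul, LinearMap.add_apply, LinearMap.smul_apply,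
      Prod.smul_mk, Prod.mk_add_mk, smul_eq_mul, Prod.mk.injEq, hfmul, hleib,
      mul_zero, zero_mul, add_zero, smul_zero]
    constructor
    · simp only [smul_add, smul_smul, mul_comm u t, mul_comm u s]
      module
    · trivial
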